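/- Let t, z ≥ 1 and let w_1, …, w_t and w'_1, …, w'_z be strings over {1,2}. Then the string w_1 0 w_2 0 ⋯ 0 w_t 3 w'_z 0 ⋯ 0 w'_2 0 w'_1 belongs to MANYTWINS if and only if t = z and w_i = w'_i for every i with 1 ≤ i ≤ t. -/

import Mathlib

/-- `joinZero [w₁, …, w_t] = w₁ 0 w₂ 0 ⋯ 0 w_t`: concatenation with the
separator symbol `0` in between. -/
def joinZero : List (List (Fin 4)) → List (Fin 4)
  | [] => []
  | [w] => w
  | w :: ws => w ++ [0] ++ joinZero ws

/-- `TWIN(t) = { w₁ 0 w₂ 0 ⋯ 0 w_t 3 w_t 0 ⋯ 0 w₂ 0 w₁ : wᵢ ∈ {1,2}^* }`. -/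
def TWIN (t : ℕ) : Set (List (Fin 4)) :=
  {s | ∃ ws : List (List (Fin 4)), ws.length = t ∧
        (∀ w ∈ ws, ∀ a ∈ w, a = 1 ∨ a = 2) ∧
        s = joinZero ws ++ [3] ++ joinZero ws.reverse}

/-- `MANYTWINS = ⋃_{t ≥ 1} TWIN(t)`. -/
def MANYTWINS : Set (List (Fin 4)) :=
  {s | ∃ t : ℕ, 1 ≤ t ∧ s ∈ TWIN t}

lemma mem_joinZero {a : Fin 4} : ∀ {ws : List (List (Fin 4))},
    a ∈ joinZero ws → a = 0 ∨ ∃ w ∈ ws, a ∈ w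
  | [], h => by simp [joinZero] at h
  | [w], h => Or.inr ⟨w, by simp, by simpa [joinZero] using h⟩
  | w :: w' :: ws, h => by
      simp only [joinZero, List.mem_append, List.mem_singleton] at h
      rcases h with (h | h) | h
      · exact Or.inr ⟨w, by simp, h⟩
      · exact Or.inl h
      · rcases mem_joinZero (ws := w' :: ws) h with h | ⟨v, hv, hav⟩
        · exact Or.inl h
        · exact Or.inr ⟨v, by simp [hv], hav⟩

lemma split_first {α : Type*} (x : α) : ∀ (A B Y Z : List α), x ∉ A → x ∉ B →
    A ++ x :: Y = B ++ x :: Z → A = B ∧ Y = Z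
  | [], [], Y, Z, _, _, h => by simpa using h
  | [], b :: B, Y, Z, _, hB, h => by
      simp at h
      exact absurd (h.1 ▸ @List.mem_cons_self _ b B) (h.1 ▸ hB)
  | a :: A, [], Y, Z, hA, _, h => by
      simp at h
      exact absurd (h.1 ▸ @List.mem_cons_self _ a A) (h.1 ▸ hA)
  | a :: A, b :: B, Y, Z, hA, hB, h => by
      simp only [List.cons_append, List.cons.injEq] at h
      obtain ⟨h1, h2⟩ := split_first x A B Y Z (fun hx => hA (List.mem_cons_of_mem _ hx))
        (fun hx => hB (List.mem_cons_of_mem _ hx)) h.2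
      exact ⟨by rw [h.1, h1], h2⟩

lemma joinZero_inj : ∀ (ws vs : List (List (Fin 4))), ws ≠ [] → vs ≠ [] →
    (∀ w ∈ ws, (0 : Fin 4) ∉ w) → (∀ w ∈ vs, (0 : Fin 4) ∉ w) →
    joinZero ws = joinZero vs → ws = vs
  | [], _, h, _, _, _, _ => absurd rfl h
  | _, [], _, h, _, _, _ => absurd rfl h
  | [w], [v], _, _, _, _, h => by simpa [joinZero] using h
  | [w], v :: v' :: vs, _, _, hw, hv, h => by
      exfalso
      simp only [joinZero] at h
      have : (0 : Fin 4) ∈ w := by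
        rw [h]; simp
      exact hw w (by simp) this
  | w :: w' :: ws, [v], _, _, hw, hv, h => by
      exfalso
      simp only [joinZero] at h
      have : (0 : Fin 4) ∈ v := by
        rw [← h]; simp
      exact hv v (by simp) this
  | w :: w' :: ws, v :: v' :: vs, _, _, hw, hv, h => by
      simp only [joinZero, List.append_assoc, List.singleton_append] at h
      obtain ⟨h1, h2⟩ := split_first (0 : Fin 4) w v _ _ (hw w (by simp)) (hv v (by simp)) h
      have := joinZero_inj (w' :: ws) (v' :: vs) (by simp) (by simp)
        (fun u hu => hw u (List.mem_cons_of_mem _ hu))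
        (fun u hu => hv u (List.mem_cons_of_mem _ hu)) h2
      rw [h1, this]

lemma no_zero_of_chars {ws : List (List (Fin 4))}
    (h : ∀ w ∈ ws, ∀ a ∈ w, a = 1 ∨ a = 2) : ∀ w ∈ ws, (0 : Fin 4) ∉ w := by
  intro w hw h0
  rcases h w hw 0 h0 with h' | h' <;> exact absurd h' (by decide)

lemma no_three_joinZero {ws : List (List (Fin 4))}
    (h : ∀ w ∈ ws, ∀ a ∈ w, a = 1 ∨ a = 2) : (3 : Fin 4) ∉ joinZero ws := by
  intro h3
  rcases mem_joinZero h3 with h' | ⟨w, hw, haw⟩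
  · exact absurd h' (by decide)
  · rcases h w hw 3 haw with h' | h' <;> exact absurd h' (by decide)

theorem stmt_15 (t z : ℕ) (ht : 1 ≤ t) (hz : 1 ≤ z)
    (ws ws' : List (List (Fin 4)))
    (hlen : ws.length = t) (hlen' : ws'.length = z)
    (hws : ∀ w ∈ ws, ∀ a ∈ w, a = 1 ∨ a = 2)
    (hws' : ∀ w ∈ ws', ∀ a ∈ w, a = 1 ∨ a = 2) :
    (joinZero ws ++ [3] ++ joinZero ws'.reverse) ∈ MANYTWINS ↔ (t = z ∧ ws = ws') := by
  have hwsne : ws ≠ [] := by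
    intro h; rw [h] at hlen; simp at hlen; omega
  have hws'ne : ws' ≠ [] := by
    intro h; rw [h] at hlen'; simp at hlen'; omega
  constructor
  · rintro ⟨t', ht', vs, hvlen, hvchar, heq⟩
    have hvsne : vs ≠ [] := by
      intro h; rw [h] at hvlen; simp at hvlen; omega
    rw [List.append_assoc, List.append_assoc, List.singleton_append,
      List.singleton_append] at heq
    obtain ⟨h1, h2⟩ := split_first (3 : Fin 4) _ _ _ _
      (no_three_joinZero hws) (no_three_joinZero hvchar) heq
    have e1 : ws = vs := joinZero_inj ws vs hwsne hvsne
      (no_zero_of_chars hws) (no_zero_of_chars hvchar) h1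
    have e2 : ws'.reverse = vs.reverse := joinZero_inj _ _
      (by simpa using hws'ne) (by simpa using hvsne)
      (by intro w hw; exact no_zero_of_chars hws' w (List.mem_reverse.mp hw))
      (by intro w hw; exact no_zero_of_chars hvchar w (List.mem_reverse.mp hw)) h2
    have e3 : ws' = vs := List.reverse_injective e2
    have e4 : ws = ws' := e1.trans e3.symm
    exact ⟨by rw [← hlen, ← hlen', e4], e4⟩
  · rintro ⟨-, rfl⟩
    exact ⟨t, ht, ws, hlen, hws, rfl⟩
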